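/- arXiv:2412.06047 — 6 statements merged into one kernel-verified Lean document; each statement's English description precedes it below -/
import Mathlib

section
/- Let α be a type and r a binary relation on α that is finitely branching (for every a, the set {b | r a b} is finite) and terminating (the converse relation fun b a => r a b is well-founded, i.e., there is no infinite forward r-chain). Then for every s, the set {t | ReflTransGen r s t} of elements reachable from s is finite. -/
/-- For a finitely branching and terminating relation `r`, the set of elements
reachable from any `s` is finite. -/
theorem finitelyBranching_terminating_reachable_finite {α : Type*} (r : α → α → Prop)
    (hfb : ∀ a, {b | r a b}.Finite)
    (hterm : WellFounded (fun b a => r a b)) (s : α) :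
    {t | Relation.ReflTransGen r s t}.Finite := by
  induction s using hterm.induction with
  | _ s ih =>
    have hsub : {t | Relation.ReflTransGen r s t} ⊆
        {s} ∪ ⋃ b ∈ {b | r s b}, {t | Relation.ReflTransGen r b t} := by
      intro t ht
      rcases (Relation.reflTransGen_iff_eq_or_transGen.mp ht).imp id (fun h => Relation.TransGen.head'_iff.mp h) with h | ⟨b, hb, hbt⟩
      · exact Or.inl h
      · exact Or.inr (Set.mem_biUnion hb hbt)
    exact Set.Finite.subset
      ((Set.finite_singleton s).union ((hfb s).biUnion fun b hb => ih b hb)) hsub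
end

section
/- Let w be a weight function for terms over a first-order language L, let w_min > 0 be a real number with w₀ ≥ w_min and w(f) ≥ w_min for every function symbol f of arity 0 or arity 1 (all weights non-negative). Then for every term t: w(t) ≥ w_min·(n₀(t) + n₁(t)), and consequently |t| ≤ 2·w_min⁻¹·w(t). -/
open FirstOrder Language

/-- The size of a term: the number of occurrences of function symbols and variables. -/
def termSize {L : FirstOrder.Language} {α : Type*} : L.Term α → ℕ
  | .var _ => 1
  | .func _ ts => 1 + ∑ i, termSize (ts i)

/-- `arityCount i t` is the number of occurrences in `t` of symbols of arity `i`,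
where variable occurrences count as arity `0`. -/
def arityCount {L : FirstOrder.Language} {α : Type*} (i : ℕ) : L.Term α → ℕ
  | .var _ => if i = 0 then 1 else 0
  | @Term.func _ _ l _ ts => (if i = l then 1 else 0) + ∑ j, arityCount i (ts j)

/-- The weight of a term w.r.t. a weight function `w` on function symbols and a
common variable weight `w₀`: the sum of the weights of all occurrences of
function symbols and variables. -/
def termWeight {L : FirstOrder.Language} {α : Type*}
    (w : ∀ l, L.Functions l → ℝ) (w₀ : ℝ) : L.Term α → ℝ
  | .var _ => w₀
  | @Term.func _ _ l f ts => w l f + ∑ j, termWeight w w₀ (ts j)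

lemma termSize_add_one_le {L : FirstOrder.Language} {α : Type*} (t : L.Term α) :
    termSize t + 1 ≤ 2 * (arityCount 0 t + arityCount 1 t) := by
  induction t with
  | var x => simp [termSize, arityCount]
  | @func l f ts ih =>
    simp only [termSize, arityCount]
    match l, f, ts, ih with
    | 0, f, ts, ih => simp
    | 1, f, ts, ih =>
      have := ih 0
      simp only [Fin.sum_univ_one, reduceIte] at *
      omega
    | (n+2), f, ts, ih =>
      have h1 : (∑ j, termSize (ts j)) + (n+2)
          ≤ 2 * ((∑ j, arityCount 0 (ts j)) + ∑ j, arityCount 1 (ts j)) := by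
        calc (∑ j, termSize (ts j)) + (n+2)
            = ∑ j : Fin (n+2), (termSize (ts j) + 1) := by
              rw [Finset.sum_add_distrib]; simp
          _ ≤ ∑ j, 2 * (arityCount 0 (ts j) + arityCount 1 (ts j)) :=
              Finset.sum_le_sum fun j _ => ih j
          _ = _ := by rw [← Finset.mul_sum, Finset.sum_add_distrib]
      simp only [if_neg (by omega : ¬(0 = n+2)), if_neg (by omega : ¬(1 = n+2))]
      omega

lemma termWeight_ge {L : FirstOrder.Language} {α : Type*}
    (w : ∀ l, L.Functions l → ℝ) (w₀ : ℝ) (wmin : ℝ)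
    (hnonneg : ∀ l (f : L.Functions l), 0 ≤ w l f)
    (hw₀ : wmin ≤ w₀)
    (hconst : ∀ f : L.Functions 0, wmin ≤ w 0 f)
    (hunary : ∀ f : L.Functions 1, wmin ≤ w 1 f)
    (t : L.Term α) :
    wmin * ((arityCount 0 t : ℝ) + (arityCount 1 t : ℝ)) ≤ termWeight w w₀ t := by
  induction t with
  | var x => simp [arityCount, termWeight]; linarith
  | @func l f ts ih =>
    simp only [arityCount, termWeight]
    have hsum : wmin * (((∑ j, arityCount 0 (ts j) : ℕ) : ℝ) + ((∑ j, arityCount 1 (ts j) : ℕ) : ℝ))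
        ≤ ∑ j, termWeight w w₀ (ts j) := by
      push_cast
      rw [← Finset.sum_add_distrib, Finset.mul_sum]
      exact Finset.sum_le_sum fun j _ => ih j
    match l, f with
    | 0, f =>
      have := hconst f
      simp only [if_pos rfl, if_neg (by omega : ¬(1=0))]
      push_cast at *
      nlinarith
    | 1, f =>
      have := hunary f
      simp only [if_pos rfl, if_neg (by omega : ¬(0=1))]
      push_cast at *
      nlinarith
    | (n+2), f =>
      have := hnonneg (n+2) f
      simp only [if_neg (by omega : ¬(0 = n+2)), if_neg (by omega : ¬(1 = n+2))]
      push_cast at *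
      nlinarith

/-- If all weights are non-negative, `w_min > 0`, `w₀ ≥ w_min`, and every function
symbol of arity 0 or 1 has weight at least `w_min`, then
`w(t) ≥ w_min·(n₀(t) + n₁(t))` and consequently `|t| ≤ 2·w_min⁻¹·w(t)`. -/
theorem termWeight_bounds {L : FirstOrder.Language} {α : Type*}
    (w : ∀ l, L.Functions l → ℝ) (w₀ : ℝ) (wmin : ℝ)
    (hnonneg : ∀ l (f : L.Functions l), 0 ≤ w l f) (h₀nonneg : 0 ≤ w₀)
    (hmin : 0 < wmin) (hw₀ : wmin ≤ w₀)
    (hconst : ∀ f : L.Functions 0, wmin ≤ w 0 f)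
    (hunary : ∀ f : L.Functions 1, wmin ≤ w 1 f)
    (t : L.Term α) :
    wmin * ((arityCount 0 t : ℝ) + (arityCount 1 t : ℝ)) ≤ termWeight w w₀ t ∧
      (termSize t : ℝ) ≤ 2 * wmin⁻¹ * termWeight w w₀ t := by
  have hA := termWeight_ge w w₀ wmin hnonneg hw₀ hconst hunary t
  refine ⟨hA, ?_⟩
  have hB := termSize_add_one_le (L := L) (α := α) t
  have hB' : (termSize t : ℝ) ≤ 2 * ((arityCount 0 t : ℝ) + (arityCount 1 t : ℝ)) := by
    have : termSize t ≤ 2 * (arityCount 0 t + arityCount 1 t) := by omega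
    push_cast
    exact_mod_cast this
  calc (termSize t : ℝ) ≤ 2 * ((arityCount 0 t : ℝ) + (arityCount 1 t : ℝ)) := hB'
    _ = 2 * wmin⁻¹ * (wmin * ((arityCount 0 t : ℝ) + (arityCount 1 t : ℝ))) := by
        field_simp
    _ ≤ 2 * wmin⁻¹ * termWeight w w₀ t := by
        apply mul_le_mul_of_nonneg_left hA
        positivity
end

section
/- Let w be a weight function for terms over a first-order language L and let w_min, w_max be real numbers with 0 < w_min, such that w₀ ≥ w_min and w(f) ≥ w_min for every function symbol f of arity 0 or arity 1, and such that w₀ ≤ w_max and w(f) ≤ w_max for every function symbol f. Then for all terms s and t with w(t) ≤ w(s): |t| ≤ 2·w_min⁻¹·w_max·|s|. In particular, the size of a term is linearly bounded by the size of any term of at least equal weight. -/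
open FirstOrder Language

lemma aux_weight_ge {L : FirstOrder.Language} {β : Type*}
    (w : ∀ l, L.Functions l → ℝ) (w₀ : ℝ) (wmin : ℝ)
    (hnonneg : ∀ l (f : L.Functions l), 0 ≤ w l f)
    (hmin : 0 < wmin) (hw₀min : wmin ≤ w₀)
    (hconst : ∀ f : L.Functions 0, wmin ≤ w 0 f)
    (hunary : ∀ f : L.Functions 1, wmin ≤ w 1 f)
    (t : L.Term β) :
    wmin * ((termSize t : ℝ) + 1) ≤ 2 * termWeight w w₀ t := by
  induction t with
  | var x => simp [termSize, termWeight]; nlinarith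
  | @func l f ts ih =>
    simp only [termSize, termWeight, Nat.cast_add, Nat.cast_one, Nat.cast_sum]
    match l, f, ts, ih with
    | 0, f, ts, ih =>
      simp only [Finset.univ_eq_empty, Finset.sum_empty]
      have := hconst f
      nlinarith
    | 1, f, ts, ih =>
      simp only [Fin.sum_univ_one]
      have := hunary f
      have := ih 0
      nlinarith
    | (n+2), f, ts, ih =>
      have hA : ∑ j, (wmin * (termSize (ts j) : ℝ) + wmin) ≤ ∑ j, 2 * termWeight w w₀ (ts j) := by
        refine Finset.sum_le_sum fun j _ => ?_
        have := ih j; linarith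
      rw [Finset.sum_add_distrib, ← Finset.mul_sum, ← Finset.mul_sum, Finset.sum_const,
        Finset.card_univ, Fintype.card_fin, nsmul_eq_mul] at hA
      have h4 := hnonneg _ f
      have hn : (0:ℝ) ≤ n := Nat.cast_nonneg n
      push_cast at hA ⊢
      nlinarith [hA]

lemma aux_weight_le {L : FirstOrder.Language} {α : Type*}
    (w : ∀ l, L.Functions l → ℝ) (w₀ wmax : ℝ)
    (hw₀max : w₀ ≤ wmax) (hmax : ∀ l (f : L.Functions l), w l f ≤ wmax)
    (s : L.Term α) :
    termWeight w w₀ s ≤ wmax * (termSize s : ℝ) := by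
  induction s with
  | var x => simp [termSize, termWeight, hw₀max]
  | @func l f ts ih =>
    simp only [termSize, termWeight, Nat.cast_add, Nat.cast_one, Nat.cast_sum, mul_add, mul_one,
      Finset.mul_sum]
    exact add_le_add (hmax _ f) (Finset.sum_le_sum fun j _ => ih j)

/-- If all weights are non-negative, `0 < w_min`, variables and function symbols of
arity 0 or 1 have weight at least `w_min`, and all weights are at most `w_max`, then
for all terms `s, t` with `w(t) ≤ w(s)` we have `|t| ≤ 2·w_min⁻¹·w_max·|s|`. -/
theorem termSize_le_of_termWeight_le {L : FirstOrder.Language} {α β : Type*}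
    (w : ∀ l, L.Functions l → ℝ) (w₀ : ℝ) (wmin wmax : ℝ)
    (hnonneg : ∀ l (f : L.Functions l), 0 ≤ w l f) (h₀nonneg : 0 ≤ w₀)
    (hmin : 0 < wmin) (hw₀min : wmin ≤ w₀)
    (hconst : ∀ f : L.Functions 0, wmin ≤ w 0 f)
    (hunary : ∀ f : L.Functions 1, wmin ≤ w 1 f)
    (hw₀max : w₀ ≤ wmax) (hmax : ∀ l (f : L.Functions l), w l f ≤ wmax)
    (s : L.Term α) (t : L.Term β)
    (hwt : termWeight w w₀ t ≤ termWeight w w₀ s) :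
    (termSize t : ℝ) ≤ 2 * wmin⁻¹ * wmax * (termSize s : ℝ) := by
  have h1 := aux_weight_ge w w₀ wmin hnonneg hmin hw₀min hconst hunary t
  have h2 := aux_weight_le w w₀ wmax hw₀max hmax s
  have hinv : 0 < wmin⁻¹ := inv_pos.2 hmin
  have : wmin * (termSize t : ℝ) ≤ 2 * (wmax * (termSize s : ℝ)) := by nlinarith
  calc (termSize t : ℝ) = wmin⁻¹ * (wmin * (termSize t : ℝ)) := by
        field_simp
    _ ≤ wmin⁻¹ * (2 * (wmax * (termSize s : ℝ))) := by
        exact mul_le_mul_of_nonneg_left this hinv.le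
    _ = 2 * wmin⁻¹ * wmax * (termSize s : ℝ) := by ring
end

section
/- Let σ be a finite type and P a multivariate polynomial over ℕ in indeterminates indexed by σ (P : MvPolynomial σ ℕ) that depends on all its indeterminates, i.e., for every i ∈ σ there is a monomial in the support of P in which the indeterminate i occurs with positive exponent (equivalently, i ∈ P.vars for all i). Then for every assignment a : σ → ℕ with 2 ≤ a i for all i, we have Σ_{i} a i ≤ MvPolynomial.eval a P. -/
open Finset

lemma sum_le_prod_of_two_le' {σ : Type*} [DecidableEq σ] (S : Finset σ) (a : σ → ℕ)
    (ha : ∀ i ∈ S, 2 ≤ a i) : ∑ i ∈ S, a i ≤ ∏ i ∈ S, a i := by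
  induction S using Finset.induction with
  | empty => simp
  | @insert x s hx ih =>
    rw [Finset.sum_insert hx, Finset.prod_insert hx]
    have h2 : 2 ≤ a x := ha x (mem_insert_self _ _)
    have ih' := ih (fun i hi => ha i (mem_insert_of_mem hi))
    rcases s.eq_empty_or_nonempty with rfl | hs
    · simp
    · have hp : 2 ≤ ∏ i ∈ s, a i := by
        obtain ⟨j, hj⟩ := hs
        calc 2 ≤ a j := ha j (mem_insert_of_mem hj)
          _ ≤ ∏ i ∈ s, a i :=
            Finset.single_le_prod' (fun i hi => by
              have := ha i (mem_insert_of_mem hi); omega) hj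
      calc a x + ∑ i ∈ s, a i ≤ a x + ∏ i ∈ s, a i := by omega
        _ ≤ a x * ∏ i ∈ s, a i := by nlinarith

/-- If a multivariate polynomial `P` over `ℕ` depends on all its indeterminates
(i.e. every `i` occurs in `P.vars`), then for every assignment `a` with `a i ≥ 2`
for all `i`, the value of `P` at `a` is at least the sum of the `a i`. -/
theorem sum_le_eval_of_depends_on_all_vars {σ : Type*} [Fintype σ] [DecidableEq σ]
    (P : MvPolynomial σ ℕ) (hdep : ∀ i : σ, i ∈ P.vars)
    (a : σ → ℕ) (ha : ∀ i, 2 ≤ a i) :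
    ∑ i, a i ≤ MvPolynomial.eval a P := by
  classical
  have hch : ∀ i : σ, ∃ d ∈ P.support, i ∈ d.support := fun i =>
    (MvPolynomial.mem_vars i).mp (hdep i)
  choose f hf1 hf2 using hch
  rw [MvPolynomial.eval_eq]
  calc ∑ i, a i = ∑ d ∈ P.support, ∑ i ∈ Finset.univ.filter (fun i => f i = d), a i :=
      (Finset.sum_fiberwise_of_maps_to (fun i _ => hf1 i) a).symm
    _ ≤ ∑ d ∈ P.support, P.coeff d * ∏ i ∈ d.support, a i ^ d i := by
      apply Finset.sum_le_sum
      intro d hd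
      have h1 : ∑ i ∈ Finset.univ.filter (fun i => f i = d), a i ≤ ∑ i ∈ d.support, a i :=
        Finset.sum_le_sum_of_subset (fun i hi => by
          simp only [Finset.mem_filter] at hi
          exact hi.2 ▸ hf2 i)
      have h2 : ∑ i ∈ d.support, a i ≤ ∏ i ∈ d.support, a i :=
        sum_le_prod_of_two_le' _ _ (fun i _ => ha i)
      have h3 : ∏ i ∈ d.support, a i ≤ ∏ i ∈ d.support, a i ^ d i :=
        Finset.prod_le_prod (fun _ _ => Nat.zero_le _) (fun i hi =>
          Nat.le_self_pow (Finsupp.mem_support_iff.mp hi) _)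
      have hc : 0 < P.coeff d := Nat.pos_of_ne_zero (MvPolynomial.mem_support_iff.mp hd)
      calc ∑ i ∈ Finset.univ.filter (fun i => f i = d), a i
          ≤ ∏ i ∈ d.support, a i ^ d i := le_trans h1 (le_trans h2 h3)
        _ ≤ P.coeff d * ∏ i ∈ d.support, a i ^ d i := Nat.le_mul_of_pos_left _ hc
end

section
/- For every term t over a first-order language L: if the nu-size of t is m (‖t‖ = m) and the depth of t is n (dp(t) = n), then the size of t satisfies |t| ≤ m + m·n. -/
open FirstOrder Language

/-- The nu-size of a term: the number of occurrences of non-unary function symbols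
and variables (i.e. occurrences of symbols of arity ≠ 1, variables counted). -/
def nuSize {L : FirstOrder.Language} {α : Type*} : L.Term α → ℕ
  | .var _ => 1
  | @Term.func _ _ l _ ts => (if l = 1 then 0 else 1) + ∑ j, nuSize (ts j)

/-- The depth of a term: `dp(x) = 0` for variables, `dp(c) = 0` for constants, and
`dp(f(t₁,…,tₙ)) = 1 + max_i dp(tᵢ)` for `n ≥ 1`. -/
def termDepth {L : FirstOrder.Language} {α : Type*} : L.Term α → ℕ
  | .var _ => 0
  | .func _ ts => Finset.univ.sup fun i => 1 + termDepth (ts i)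

lemma one_le_nuSize {L : FirstOrder.Language} {α : Type*} (t : L.Term α) :
    1 ≤ nuSize t := by
  induction t with
  | var _ => simp [nuSize]
  | func f ts ih =>
    rename_i l
    rcases eq_or_ne l 1 with h | h
    · subst h
      simpa [nuSize] using ih 0
    · simp [nuSize, h]

lemma termSize_le_aux {L : FirstOrder.Language} {α : Type*} (t : L.Term α) :
    termSize t ≤ nuSize t * (1 + termDepth t) := by
  induction t with
  | var _ => simp [termSize, nuSize, termDepth]
  | func f ts ih =>
    rename_i l
    have hd : ∀ i, 1 + termDepth (ts i) ≤ termDepth (Term.func f ts) := fun i =>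
      Finset.le_sup (f := fun i => 1 + termDepth (ts i)) (Finset.mem_univ i)
    rcases eq_or_ne l 1 with h | h
    · subst h
      have h0 := ih 0
      have hn := one_le_nuSize (ts 0)
      have hD := hd 0
      have hm := Nat.mul_le_mul_left (nuSize (ts 0)) hD
      simp only [termSize, nuSize, reduceIte, zero_add, Fin.sum_univ_one]
      nlinarith
    · simp only [termSize, nuSize, if_neg h]
      have hsum : ∑ i, termSize (ts i) ≤
          (∑ i, nuSize (ts i)) * termDepth (Term.func f ts) := by
        rw [Finset.sum_mul]
        refine Finset.sum_le_sum fun i _ => ?_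
        calc termSize (ts i) ≤ nuSize (ts i) * (1 + termDepth (ts i)) := ih i
          _ ≤ nuSize (ts i) * termDepth (Term.func f ts) :=
            Nat.mul_le_mul_left _ (hd i)
      have : (1 + ∑ j, nuSize (ts j)) * (1 + termDepth (Term.func f ts)) =
          1 + termDepth (Term.func f ts) + (∑ j, nuSize (ts j)) +
          (∑ j, nuSize (ts j)) * termDepth (Term.func f ts) := by ring
      omega

/-- If `‖t‖ = m` and `dp(t) = n`, then `|t| ≤ m + m·n`. -/
theorem termSize_le_nuSize_mul_depth {L : FirstOrder.Language} {α : Type*}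
    (t : L.Term α) (m n : ℕ) (hm : nuSize t = m) (hn : termDepth t = n) :
    termSize t ≤ m + m * n := by
  subst hm hn
  have := termSize_le_aux t
  rw [Nat.mul_add, Nat.mul_one] at this
  exact this
end

section
/- Let s and t be terms over a first-order language L with variables from a type α such that |s| > |t| and |s|_x ≥ |t|_x for every variable x. Then for every substitution σ : α → L.Term β we have |s.subst σ| > |t.subst σ|. (This is the closure-under-substitution property of the size-based reduction order: s ≻ t iff |s| > |t| and |s|_x ≥ |t|_x for all variables x.) -/
open FirstOrder Language

/-- `varCount x t` is the number of occurrences of the variable `x` in `t`. -/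
def varCount {L : FirstOrder.Language} {α : Type*} [DecidableEq α] (x : α) :
    L.Term α → ℕ
  | .var y => if y = x then 1 else 0
  | .func _ ts => ∑ j, varCount x (ts j)

lemma one_le_termSize {L : FirstOrder.Language} {α : Type*} (t : L.Term α) :
    1 ≤ termSize t := by
  cases t <;> simp [termSize]

lemma mem_varFinset_of_varCount_ne_zero {L : FirstOrder.Language} {α : Type*} [DecidableEq α]
    {x : α} : ∀ (t : L.Term α), varCount x t ≠ 0 → x ∈ t.varFinset
  | .var y, h => by
    simp only [varCount] at h
    split_ifs at h with hy
    · simp [Term.varFinset, hy]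
    · simp at h
  | .func f ts, h => by
    simp only [varCount] at h
    obtain ⟨i, -, hi⟩ := Finset.exists_ne_zero_of_sum_ne_zero h
    simp only [Term.varFinset, Finset.mem_biUnion, Finset.mem_univ]
    exact ⟨i, trivial, mem_varFinset_of_varCount_ne_zero (ts i) hi⟩

lemma termSize_subst_eq {L : FirstOrder.Language} {α β : Type*} [DecidableEq α]
    (σ : α → L.Term β) (A : Finset α) :
    ∀ (t : L.Term α), (∀ x : α, varCount x t ≠ 0 → x ∈ A) →
      termSize (t.subst σ) =
        termSize t + ∑ x ∈ A, varCount x t * (termSize (σ x) - 1)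
  | .var y, h => by
    have hy : y ∈ A := h y (by simp [varCount])
    have : ∀ x ∈ A, varCount x (Term.var y : L.Term α) * (termSize (σ x) - 1)
        = if x = y then termSize (σ y) - 1 else 0 := by
      intro x _
      rcases eq_or_ne x y with rfl | hxy
      · simp [varCount]
      · simp [varCount, hxy, hxy.symm]
    rw [Finset.sum_congr rfl this, Finset.sum_ite_eq' A y, if_pos hy]
    simp only [Term.subst, termSize]
    have := one_le_termSize (σ y)
    omega
  | .func f ts, h => by
    have ih : ∀ i, termSize ((ts i).subst σ) =
        termSize (ts i) + ∑ x ∈ A, varCount x (ts i) * (termSize (σ x) - 1) := by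
      intro i
      refine termSize_subst_eq σ A (ts i) fun x hx => h x ?_
      simp only [varCount]
      intro h0
      exact hx (Finset.sum_eq_zero_iff.mp h0 i (Finset.mem_univ i))
    simp only [Term.subst, termSize, varCount, ih]
    rw [Finset.sum_add_distrib]
    have h2 : ∑ x ∈ A, (∑ j, varCount x (ts j)) * (termSize (σ x) - 1)
        = ∑ i, ∑ x ∈ A, varCount x (ts i) * (termSize (σ x) - 1) := by
      simp only [Finset.sum_mul]
      exact Finset.sum_comm
    rw [h2]
    ring

/-- Closure under substitution of the size-based reduction order: if `|s| > |t|`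
and `|s|_x ≥ |t|_x` for every variable `x`, then `|s.subst σ| > |t.subst σ|` for
every substitution `σ`. -/
theorem termSize_subst_lt {L : FirstOrder.Language} {α β : Type*} [DecidableEq α]
    (s t : L.Term α) (hsize : termSize t < termSize s)
    (hvar : ∀ x : α, varCount x t ≤ varCount x s)
    (σ : α → L.Term β) :
    termSize (t.subst σ) < termSize (s.subst σ) := by
  set A := s.varFinset ∪ t.varFinset with hA
  rw [termSize_subst_eq σ A t
      (fun x hx => Finset.mem_union_right _ (mem_varFinset_of_varCount_ne_zero t hx)),
    termSize_subst_eq σ A s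
      (fun x hx => Finset.mem_union_left _ (mem_varFinset_of_varCount_ne_zero s hx))]
  have : ∑ x ∈ A, varCount x t * (termSize (σ x) - 1)
      ≤ ∑ x ∈ A, varCount x s * (termSize (σ x) - 1) :=
    Finset.sum_le_sum fun x _ => Nat.mul_le_mul_right _ (hvar x)
  omega
end
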